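/- Let ((x_n, τ_n))_{n∈ℕ} be a sequence in ℂ² × ℝ and (x, τ) ∈ ℂ² × ℝ such that the sequence (q(x_n, τ_n))_{n∈ℕ} converges to q(x, τ) in Q_θ. Then there exists a strictly increasing sequence of natural numbers n_1 < n_2 < ⋯ such that for every k there exist x'_k ∈ ℂ² and τ'_k ∈ ℝ with q(x'_k, τ'_k) = q(x_{n_k}, τ_{n_k}), and moreover x'_k → x in ℂ² and τ'_k → τ in ℝ as k → ∞. -/

import Mathlib

open Filter Topology

/-- The equivalence relation `∼` on `ℂ² × ℝ`: `((z₁,z₂),τ) ∼ ((w₁,w₂),σ)` iff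
`|z₁| = |w₁|`, `|z₂| = |w₂|`, and moreover `τ - σ ∈ ℤ` when `z₁ ≠ 0 = z₂`,
`τ - σ ∈ θℤ` when `z₁ = 0 ≠ z₂`, and `τ = σ` when `z₁ = z₂ = 0`. -/
def mrel (θ : ℝ) (p q : (ℂ × ℂ) × ℝ) : Prop :=
  ‖p.1.1‖ = ‖q.1.1‖ ∧
  ‖p.1.2‖ = ‖q.1.2‖ ∧
  (p.1.1 ≠ 0 ∧ p.1.2 = 0 → ∃ k : ℤ, p.2 - q.2 = (k : ℝ)) ∧
  (p.1.1 = 0 ∧ p.1.2 ≠ 0 → ∃ k : ℤ, p.2 - q.2 = θ * (k : ℝ)) ∧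
  (p.1.1 = 0 ∧ p.1.2 = 0 → p.2 = q.2)

theorem mrel_equivalence (θ : ℝ) : Equivalence (mrel θ) := by
  constructor
  · exact fun p => ⟨rfl, rfl, fun _ => ⟨0, by simp⟩, fun _ => ⟨0, by simp⟩, fun _ => rfl⟩
  · rintro p q ⟨h1, h2, h3, h4, h5⟩
    have key : ∀ a b : ℂ, ‖a‖ = ‖b‖ → (a = 0 ↔ b = 0) := by
      intro a b h
      rw [← norm_eq_zero, h, norm_eq_zero]
    have e1 : p.1.1 = 0 ↔ q.1.1 = 0 := key _ _ h1
    have e2 : p.1.2 = 0 ↔ q.1.2 = 0 := key _ _ h2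
    refine ⟨h1.symm, h2.symm, ?_, ?_, ?_⟩
    · rintro ⟨hq1, hq2⟩
      obtain ⟨k, hk⟩ := h3 ⟨fun h => hq1 (e1.mp h), e2.mpr hq2⟩
      exact ⟨-k, by push_cast; linarith⟩
    · rintro ⟨hq1, hq2⟩
      obtain ⟨k, hk⟩ := h4 ⟨e1.mpr hq1, fun h => hq2 (e2.mp h)⟩
      exact ⟨-k, by push_cast; linarith⟩
    · rintro ⟨hq1, hq2⟩
      exact (h5 ⟨e1.mpr hq1, e2.mpr hq2⟩).symm
  · rintro p q r ⟨h1, h2, h3, h4, h5⟩ ⟨g1, g2, g3, g4, g5⟩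
    have key : ∀ a b : ℂ, ‖a‖ = ‖b‖ → (a = 0 ↔ b = 0) := by
      intro a b h
      rw [← norm_eq_zero, h, norm_eq_zero]
    have e1 : p.1.1 = 0 ↔ q.1.1 = 0 := key _ _ h1
    have e2 : p.1.2 = 0 ↔ q.1.2 = 0 := key _ _ h2
    refine ⟨h1.trans g1, h2.trans g2, ?_, ?_, ?_⟩
    · rintro ⟨hp1, hp2⟩
      obtain ⟨k, hk⟩ := h3 ⟨hp1, hp2⟩
      obtain ⟨l, hl⟩ := g3 ⟨fun h => hp1 (e1.mpr h), e2.mp hp2⟩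
      exact ⟨k + l, by push_cast; linarith⟩
    · rintro ⟨hp1, hp2⟩
      obtain ⟨k, hk⟩ := h4 ⟨hp1, hp2⟩
      obtain ⟨l, hl⟩ := g4 ⟨e1.mp hp1, fun h => hp2 (e2.mpr h)⟩
      refine ⟨k + l, by push_cast; linarith [mul_add θ (k : ℝ) (l : ℝ)]⟩
    · rintro ⟨hp1, hp2⟩
      exact (h5 ⟨hp1, hp2⟩).trans (g5 ⟨e1.mp hp1, e2.mp hp2⟩)

/-- The setoid on `ℂ² × ℝ` given by the relation `∼`. -/
def mSetoid (θ : ℝ) : Setoid ((ℂ × ℂ) × ℝ) := ⟨mrel θ, mrel_equivalence θ⟩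

/-- The quotient space `Q_θ = (ℂ² × ℝ)/∼`, with the quotient topology. -/
abbrev Qspace (θ : ℝ) : Type := Quotient (mSetoid θ)

/-- The quotient map `q : ℂ² × ℝ → Q_θ`. -/
def qmap (θ : ℝ) : (ℂ × ℂ) × ℝ → Qspace θ := Quotient.mk (mSetoid θ)






noncomputable def cdir (w : ℂ) : ℂ := if w = 0 then 1 else w / (‖w‖ : ℂ)

lemma abs_cdir (w : ℂ) : ‖cdir w‖ = 1 := by
  unfold cdir
  split_ifs with h
  · simp
  · rw [norm_div, Complex.norm_real, norm_norm, div_self (norm_ne_zero_iff.mpr h)]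

lemma cdir_ne_zero (w : ℂ) : cdir w ≠ 0 := by
  intro h
  have := abs_cdir w
  rw [h] at this
  simp at this

lemma cdir_mul_abs (w : ℂ) : cdir w * (‖w‖ : ℂ) = w := by
  unfold cdir
  split_ifs with h
  · simp [h]
  · rw [div_mul_cancel₀]
    exact Complex.ofReal_ne_zero.2 (norm_ne_zero_iff.mpr h)

lemma key_open (θ τ₀ ε : ℝ) (hε : 0 < ε) :
    ∃ U : Set ((ℂ × ℂ) × ℝ), IsOpen U ∧ (∀ a b, mrel θ a b → (a ∈ U → b ∈ U)) ∧
      (∀ z : ℂ × ℂ, (z, τ₀) ∈ U) ∧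
      (∀ p ∈ U, (p.1.1 = 0 → p.1.2 = 0 → |p.2 - τ₀| < ε) ∧
                (p.1.1 ≠ 0 → p.1.2 = 0 → ∃ m : ℤ, |p.2 - τ₀ - (m : ℝ)| < ε) ∧
                (p.1.1 = 0 → p.1.2 ≠ 0 → ∃ m : ℤ, |p.2 - τ₀ - θ * (m : ℝ)| < ε)) := by
  classical
  set S1 : Set ((ℂ × ℂ) × ℝ) := {p | p.1.1 ≠ 0} with hS1
  set S2 : Set ((ℂ × ℂ) × ℝ) := {p | p.1.2 ≠ 0} with hS2
  set BZ : Set ((ℂ × ℂ) × ℝ) := ⋃ m : ℤ, {p | |p.2 - τ₀ - (m : ℝ)| < ε} with hBZ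
  set CZ : Set ((ℂ × ℂ) × ℝ) := ⋃ m : ℤ, {p | |p.2 - τ₀ - θ * (m : ℝ)| < ε} with hCZ
  set D : Set ((ℂ × ℂ) × ℝ) := {p | |p.2 - τ₀| < ε} with hD
  refine ⟨(S1 ∩ S2) ∪ (S1 ∩ BZ) ∪ (S2 ∩ CZ) ∪ D, ?_, ?_, ?_, ?_⟩
  · have c11 : Continuous (fun p : (ℂ × ℂ) × ℝ => p.1.1) := continuous_fst.comp continuous_fst
    have c12 : Continuous (fun p : (ℂ × ℂ) × ℝ => p.1.2) := continuous_snd.comp continuous_fst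
    have hS1o : IsOpen S1 := isOpen_ne.preimage c11
    have hS2o : IsOpen S2 := isOpen_ne.preimage c12
    have hBo : IsOpen BZ := isOpen_iUnion fun m =>
      isOpen_lt (continuous_abs.comp ((continuous_snd.sub continuous_const).sub continuous_const))
        continuous_const
    have hCo : IsOpen CZ := isOpen_iUnion fun m =>
      isOpen_lt (continuous_abs.comp ((continuous_snd.sub continuous_const).sub continuous_const))
        continuous_const
    have hDo : IsOpen D :=
      isOpen_lt (continuous_abs.comp (continuous_snd.sub continuous_const)) continuous_const
    exact (((hS1o.inter hS2o).union (hS1o.inter hBo)).union (hS2o.inter hCo)).union hDo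
  · rintro ⟨⟨z1, z2⟩, t⟩ ⟨⟨w1, w2⟩, s⟩ ⟨e1, e2, c1, c2, c3⟩ hU
    have hz1 : z1 = 0 ↔ w1 = 0 := by
      rw [← norm_eq_zero, e1, norm_eq_zero]
    have hz2 : z2 = 0 ↔ w2 = 0 := by
      rw [← norm_eq_zero, e2, norm_eq_zero]
    dsimp only at c1 c2 c3
    simp only [Set.mem_union, Set.mem_inter_iff, Set.mem_iUnion, Set.mem_setOf_eq, hS1, hS2,
      hBZ, hCZ, hD] at hU ⊢
    rcases hU with (((⟨hz1', hz2'⟩ | ⟨hz1', m, hm⟩) | ⟨hz2', m, hm⟩) | ht)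
    · exact Or.inl (Or.inl (Or.inl ⟨fun h => hz1' (hz1.2 h), fun h => hz2' (hz2.2 h)⟩))
    · by_cases hz2' : z2 = 0
      · obtain ⟨k, hk⟩ := c1 ⟨hz1', hz2'⟩
        refine Or.inl (Or.inl (Or.inr ⟨fun h => hz1' (hz1.2 h), m - k, ?_⟩))
        have : s - τ₀ - ((m : ℝ) - (k : ℝ)) = t - τ₀ - m := by linarith
        rw [Int.cast_sub, this]
        exact hm
      · exact Or.inl (Or.inl (Or.inl ⟨fun h => hz1' (hz1.2 h), fun h => hz2' (hz2.2 h)⟩))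
    · by_cases hz1' : z1 = 0
      · obtain ⟨k, hk⟩ := c2 ⟨hz1', hz2'⟩
        refine Or.inl (Or.inr ⟨fun h => hz2' (hz2.2 h), m - k, ?_⟩)
        have : s - τ₀ - θ * ((m : ℝ) - (k : ℝ)) = t - τ₀ - θ * m := by ring_nf; linarith
        rw [Int.cast_sub, this]
        exact hm
      · exact Or.inl (Or.inl (Or.inl ⟨fun h => hz1' (hz1.2 h), fun h => hz2' (hz2.2 h)⟩))
    · by_cases hz1' : z1 = 0 <;> by_cases hz2' : z2 = 0
      · have := c3 ⟨hz1', hz2'⟩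
        exact Or.inr (by rw [← this]; exact ht)
      · obtain ⟨k, hk⟩ := c2 ⟨hz1', hz2'⟩
        refine Or.inl (Or.inr ⟨fun h => hz2' (hz2.2 h), -k, ?_⟩)
        have : s - τ₀ - θ * ((-k : ℤ) : ℝ) = t - τ₀ := by push_cast; linarith
        rw [this]
        exact ht
      · obtain ⟨k, hk⟩ := c1 ⟨hz1', hz2'⟩
        refine Or.inl (Or.inl (Or.inr ⟨fun h => hz1' (hz1.2 h), -k, ?_⟩))
        have : s - τ₀ - ((-k : ℤ) : ℝ) = t - τ₀ := by push_cast; linarith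
        rw [this]
        exact ht
      · exact Or.inl (Or.inl (Or.inl ⟨fun h => hz1' (hz1.2 h), fun h => hz2' (hz2.2 h)⟩))
  · intro z
    exact Or.inr (by simpa [hD] using hε)
  · rintro ⟨⟨z1, z2⟩, t⟩ hU
    simp only [Set.mem_union, Set.mem_inter_iff, Set.mem_iUnion, Set.mem_setOf_eq, hS1, hS2,
      hBZ, hCZ, hD] at hU
    refine ⟨?_, ?_, ?_⟩
    · rintro h1 h2
      rcases hU with (((⟨h, _⟩ | ⟨h, _⟩) | ⟨h, _⟩) | ht) <;> first | exact absurd h1 h | exact absurd h2 h | exact ht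
    · rintro h1 h2
      rcases hU with (((⟨_, h⟩ | ⟨_, m, hm⟩) | ⟨h, _⟩) | ht)
      · exact absurd h2 h
      · exact ⟨m, hm⟩
      · exact absurd h2 h
      · exact ⟨0, by simpa using ht⟩
    · rintro h1 h2
      rcases hU with (((⟨h, _⟩ | ⟨h, _⟩) | ⟨_, m, hm⟩) | ht)
      · exact absurd h1 h
      · exact absurd h1 h
      · exact ⟨m, hm⟩
      · exact ⟨0, by simpa using ht⟩

/-- If `q(x_n, τ_n) → q(x, τ)` in `Q_θ`, then there is a strictly increasing sequence
`n₁ < n₂ < ⋯` and representatives `(x'_k, τ'_k)` with `q(x'_k, τ'_k) = q(x_{n_k}, τ_{n_k})`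
such that `x'_k → x` and `τ'_k → τ`. -/
theorem exists_subseq_of_tendsto_qmap (θ : ℝ) (hθ : Irrational θ)
    (x : ℕ → ℂ × ℂ) (τ : ℕ → ℝ) (x₀ : ℂ × ℂ) (τ₀ : ℝ)
    (h : Tendsto (fun n => qmap θ (x n, τ n)) atTop (𝓝 (qmap θ (x₀, τ₀)))) :
    ∃ φ : ℕ → ℕ, StrictMono φ ∧
      ∃ (x' : ℕ → ℂ × ℂ) (τ' : ℕ → ℝ),
        (∀ k, qmap θ (x' k, τ' k) = qmap θ (x (φ k), τ (φ k))) ∧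
        Tendsto x' atTop (𝓝 x₀) ∧ Tendsto τ' atTop (𝓝 τ₀) := by
  classical
  have hθ0 : θ ≠ 0 := by
    intro h0
    exact hθ.ne_int 0 (by simp [h0])
  have hqm : IsQuotientMap (qmap θ) := isQuotientMap_quotient_mk'
  -- abs convergence
  have key : ∀ (g : (ℂ × ℂ) × ℝ → ℝ), Continuous g →
      ∀ (hinv : ∀ a b : (ℂ × ℂ) × ℝ, mrel θ a b → g a = g b),
      Tendsto (fun n => g (x n, τ n)) atTop (𝓝 (g (x₀, τ₀))) := by
    intro g hg hinv
    have hcont : Continuous (Quotient.lift g hinv : Qspace θ → ℝ) :=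
      hg.quotient_lift hinv
    exact (hcont.tendsto _).comp h
  have habs1 : Tendsto (fun n => ‖(x n).1‖) atTop (𝓝 (‖x₀.1‖)) :=
    key (fun p => ‖p.1.1‖)
      (continuous_norm.comp (continuous_fst.comp continuous_fst))
      (fun a b hab => hab.1)
  have habs2 : Tendsto (fun n => ‖(x n).2‖) atTop (𝓝 (‖x₀.2‖)) :=
    key (fun p => ‖p.1.2‖)
      (continuous_norm.comp (continuous_snd.comp continuous_fst))
      (fun a b hab => hab.2.1)
  set x' : ℕ → ℂ × ℂ := fun n =>
    (cdir x₀.1 * (‖(x n).1‖ : ℂ), cdir x₀.2 * (‖(x n).2‖ : ℂ)) with hx'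
  set τ' : ℕ → ℝ := fun n =>
    if (x n).1 = 0 then
      (if (x n).2 = 0 then τ n else τ n - θ * round ((τ n - τ₀) / θ))
    else
      (if (x n).2 = 0 then τ n - round (τ n - τ₀) else τ₀) with hτ'
  have habseq : ∀ n, ‖(x' n).1‖ = ‖(x n).1‖ ∧
      ‖(x' n).2‖ = ‖(x n).2‖ := by
    intro n
    constructor <;>
    · show ‖_ * _‖ = _
      rw [norm_mul, abs_cdir, one_mul, Complex.norm_real, norm_norm]
  refine ⟨id, strictMono_id, x', τ', ?_, ?_, ?_⟩
  · intro k
    apply Quotient.sound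
    have e1 := (habseq k).1
    have e2 := (habseq k).2
    have z1 : (x' k).1 = 0 ↔ (x k).1 = 0 := by
      rw [← norm_eq_zero, e1, norm_eq_zero]
    have z2 : (x' k).2 = 0 ↔ (x k).2 = 0 := by
      rw [← norm_eq_zero, e2, norm_eq_zero]
    refine ⟨e1, e2, ?_, ?_, ?_⟩
    · rintro ⟨h1, h2⟩
      have hx1 : (x k).1 ≠ 0 := fun hh => h1 (z1.2 hh)
      have hx2 : (x k).2 = 0 := z2.1 h2
      refine ⟨-round (τ k - τ₀), ?_⟩
      show τ' k - τ k = _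
      rw [hτ']
      simp only [if_neg hx1, if_pos hx2]
      push_cast
      ring
    · rintro ⟨h1, h2⟩
      have hx1 : (x k).1 = 0 := z1.1 h1
      have hx2 : (x k).2 ≠ 0 := fun hh => h2 (z2.2 hh)
      refine ⟨-round ((τ k - τ₀) / θ), ?_⟩
      show τ' k - τ k = _
      rw [hτ']
      simp only [if_pos hx1, if_neg hx2]
      push_cast
      ring
    · rintro ⟨h1, h2⟩
      have hx1 : (x k).1 = 0 := z1.1 h1
      have hx2 : (x k).2 = 0 := z2.1 h2
      show τ' k = τ k
      rw [hτ']
      simp only [if_pos hx1, if_pos hx2]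
  · have h1 : Tendsto (fun n => (x' n).1) atTop (𝓝 x₀.1) := by
      have t1 : Tendsto (fun n => cdir x₀.1 * (‖(x n).1‖ : ℂ)) atTop
          (𝓝 (cdir x₀.1 * (‖x₀.1‖ : ℂ))) :=
        ((Complex.continuous_ofReal.tendsto _).comp habs1).const_mul _
      rw [cdir_mul_abs] at t1
      exact t1
    have h2 : Tendsto (fun n => (x' n).2) atTop (𝓝 x₀.2) := by
      have t2 : Tendsto (fun n => cdir x₀.2 * (‖(x n).2‖ : ℂ)) atTop
          (𝓝 (cdir x₀.2 * (‖x₀.2‖ : ℂ))) :=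
        ((Complex.continuous_ofReal.tendsto _).comp habs2).const_mul _
      rw [cdir_mul_abs] at t2
      exact t2
    exact h1.prodMk_nhds h2
  · rw [Metric.tendsto_nhds]
    intro ε hε
    obtain ⟨U, hUopen, hUsat, hUmem, hUbound⟩ := key_open θ τ₀ ε hε
    have hUsat' : ∀ a b : (ℂ × ℂ) × ℝ, mrel θ a b → (a ∈ U) = (b ∈ U) := by
      intro a b hab
      exact propext ⟨hUsat a b hab, hUsat b a ((mrel_equivalence θ).symm hab)⟩
    set V : Set (Qspace θ) := {a | Quotient.lift (· ∈ U) hUsat' a} with hV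
    have hVopen : IsOpen V := by
      rw [← hqm.isOpen_preimage]
      exact hUopen
    have hVmem : qmap θ (x₀, τ₀) ∈ V := hUmem x₀
    have hev : ∀ᶠ n in atTop, (x n, τ n) ∈ U :=
      h.eventually (eventually_of_mem (hVopen.mem_nhds hVmem) (fun y hy => hy))
    filter_upwards [hev] with n hn
    rw [Real.dist_eq]
    obtain ⟨b00, b10, b01⟩ := hUbound _ hn
    by_cases hx1 : (x n).1 = 0 <;> by_cases hx2 : (x n).2 = 0
    · have : τ' n = τ n := by rw [hτ']; simp only [if_pos hx1, if_pos hx2]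
      rw [this]
      exact b00 hx1 hx2
    · have heq : τ' n = τ n - θ * round ((τ n - τ₀) / θ) := by
        rw [hτ']; simp only [if_pos hx1, if_neg hx2]
      obtain ⟨m, hm⟩ := b01 hx1 hx2
      rw [heq]
      calc |τ n - θ * round ((τ n - τ₀) / θ) - τ₀| 
          = |θ| * |(τ n - τ₀) / θ - round ((τ n - τ₀) / θ)| := by
            rw [← abs_mul, mul_sub, mul_div_cancel₀ _ hθ0]; ring_nf
        _ ≤ |θ| * |(τ n - τ₀) / θ - m| := by
            exact mul_le_mul_of_nonneg_left (round_le _ m) (abs_nonneg θ)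
        _ = |τ n - τ₀ - θ * m| := by
            rw [← abs_mul, mul_sub, mul_div_cancel₀ _ hθ0]
        _ < ε := hm
    · have heq : τ' n = τ n - round (τ n - τ₀) := by
        rw [hτ']; simp only [if_neg hx1, if_pos hx2]
      obtain ⟨m, hm⟩ := b10 hx1 hx2
      rw [heq]
      calc |τ n - (round (τ n - τ₀) : ℝ) - τ₀| = |(τ n - τ₀) - round (τ n - τ₀)| := by ring_nf
        _ ≤ |(τ n - τ₀) - m| := round_le _ m
        _ < ε := hm
    · have : τ' n = τ₀ := by rw [hτ']; simp only [if_neg hx1, if_neg hx2]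
      rw [this]
      simpa using hε
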